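/- (Sparse sampling accuracy, full theorem.) Consider the finite-horizon game model: S finite, A finite nonempty, P(·|s,a) a transition kernel, τ the player function, h : S → [−v_max, v_max] the evaluation. Define V_d by the depth-d minimax recursion, and define the estimator V̂_d(s) by the same recursion except that at each state-action pair, V̂_d(s,a) = (1/c)Σ_{i=1}^c V̂_{d−1}(s_i) with s₁,…,s_c drawn i.i.d. from P(·|s,a) (all samples across the recursion independent). Then for every state s, every λ ∈ (0, 2v_max], every d ≥ 0: P(|V̂_d(s) − V_d(s)| ≤ λd) ≥ 1 − (2c|A|)^d exp(−λ²c/(2v_max²)). -/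

import Mathlib

open MeasureTheory ProbabilityTheory Finset
set_option linter.unusedSectionVars false
set_option linter.unusedVariables false
set_option maxHeartbeats 1000000


lemma aux_L (p : ℝ) (hp0 : 0 ≤ p) (hp1 : p ≤ 1) (u : ℝ) :
    (1 - p) * Real.exp (-(p * u)) + p * Real.exp ((1 - p) * u) ≤ Real.exp (u ^ 2 / 8) := by
  have hD : ∀ x : ℝ, 0 < 1 - p + p * Real.exp x := by
    intro x
    rcases eq_or_lt_of_le hp1 with h1 | h1
    · rw [h1]; simpa using Real.exp_pos x
    · have := Real.exp_pos x
      nlinarith [mul_nonneg hp0 (Real.exp_pos x).le]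
  set φ : ℝ → ℝ := fun u => u ^ 2 / 8 + p * u - Real.log (1 - p + p * Real.exp u) with hφdef
  set ψ : ℝ → ℝ := fun u => u / 4 + p - p * Real.exp u / (1 - p + p * Real.exp u) with hψdef
  have hE : ∀ x : ℝ, HasDerivAt (fun x => 1 - p + p * Real.exp x) (p * Real.exp x) x := by
    intro x
    simpa using ((Real.hasDerivAt_exp x).const_mul p).const_add (1 - p)
  have hφ' : ∀ x : ℝ, HasDerivAt φ (ψ x) x := by
    intro x
    have hlog : HasDerivAt (fun x => Real.log (1 - p + p * Real.exp x))
        (p * Real.exp x / (1 - p + p * Real.exp x)) x := (hE x).log (hD x).ne'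
    have hsq : HasDerivAt (fun x : ℝ => x ^ 2 / 8 + p * x) (x / 4 + p) x := by
      have h1 : HasDerivAt (fun x : ℝ => x ^ 2 / 8) ((2 * x ^ 1) / 8) x :=
        (hasDerivAt_pow 2 x).div_const 8
      have h2 : HasDerivAt (fun x : ℝ => p * x) p x := by
        simpa using (hasDerivAt_id x).const_mul p
      exact (h1.add h2).congr_deriv (by ring)
    exact hsq.sub hlog
  have hψ' : ∀ x : ℝ, HasDerivAt ψ
      (1 / 4 - (p * Real.exp x * (1 - p + p * Real.exp x) -
        p * Real.exp x * (p * Real.exp x)) / (1 - p + p * Real.exp x) ^ 2) x := by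
    intro x
    have hnum : HasDerivAt (fun x => p * Real.exp x) (p * Real.exp x) x :=
      (Real.hasDerivAt_exp x).const_mul p
    have hdiv := hnum.div (hE x) (hD x).ne'
    have hlin : HasDerivAt (fun x : ℝ => x / 4 + p) (1 / 4) x := by
      simpa using ((hasDerivAt_id x).div_const 4).add_const p
    exact hlin.sub hdiv
  have hψmono : Monotone ψ := by
    apply monotone_of_deriv_nonneg (fun x => (hψ' x).differentiableAt)
    intro x
    rw [(hψ' x).deriv]
    have hD2 : (0:ℝ) < (1 - p + p * Real.exp x) ^ 2 := pow_pos (hD x) 2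
    rw [sub_nonneg, div_le_iff₀ hD2]
    nlinarith [sq_nonneg (1 - p - p * Real.exp x), Real.exp_pos x,
      mul_nonneg hp0 (Real.exp_pos x).le]
  have hψ0 : ψ 0 = 0 := by
    simp [hψdef]
  have hφdiff : Differentiable ℝ φ := fun x => (hφ' x).differentiableAt
  have hφ0 : φ 0 = 0 := by
    simp [hφdef]
  have hφnonneg : ∀ u : ℝ, 0 ≤ φ u := by
    intro u
    rcases le_total 0 u with hu | hu
    · have hmono : MonotoneOn φ (Set.Ici (0:ℝ)) := by
        apply monotoneOn_of_deriv_nonneg (convex_Ici 0) hφdiff.continuous.continuousOn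
          hφdiff.differentiableOn
        intro x hx
        rw [(hφ' x).deriv]
        rw [interior_Ici] at hx
        have := hψmono (le_of_lt hx)
        rw [hψ0] at this
        exact this
      have := hmono (Set.self_mem_Ici) (Set.mem_Ici.2 hu) hu
      rwa [hφ0] at this
    · have hanti : AntitoneOn φ (Set.Iic (0:ℝ)) := by
        apply antitoneOn_of_deriv_nonpos (convex_Iic 0) hφdiff.continuous.continuousOn
          hφdiff.differentiableOn
        intro x hx
        rw [(hφ' x).deriv]
        rw [interior_Iic] at hx
        have := hψmono (le_of_lt hx)
        rw [hψ0] at this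
        exact this
      have := hanti (Set.mem_Iic.2 hu) (Set.self_mem_Iic) hu
      rwa [hφ0] at this
  have hexp : Real.exp ((1 - p) * u) = Real.exp (-(p * u)) * Real.exp u := by
    rw [← Real.exp_add]; ring_nf
  have hLHS : (1 - p) * Real.exp (-(p * u)) + p * Real.exp ((1 - p) * u)
      = Real.exp (-(p * u)) * (1 - p + p * Real.exp u) := by
    rw [hexp]; ring
  rw [hLHS]
  have : Real.exp (-(p * u)) * (1 - p + p * Real.exp u)
      = Real.exp (-(p * u) + Real.log (1 - p + p * Real.exp u)) := by
    rw [Real.exp_add, Real.exp_log (hD u)]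
  rw [this]
  apply Real.exp_le_exp.2
  have := hφnonneg u
  rw [hφdef] at this
  simp only at this
  linarith


lemma aux_mgf {σ : Type*} [Fintype σ] (q g : σ → ℝ) (vmax t : ℝ) (hv : 0 < vmax)
    (hq0 : ∀ s, 0 ≤ q s) (hq1 : ∑ s, q s = 1) (hg : ∀ s, |g s| ≤ vmax) :
    ∑ s, q s * Real.exp (t * (g s - ∑ s', q s' * g s'))
      ≤ Real.exp (t ^ 2 * vmax ^ 2 / 2) := by
  set μ : ℝ := ∑ s', q s' * g s' with hμ
  have hsum_le : ∀ (f : σ → ℝ), (∀ s, f s ≤ vmax) → ∑ s, q s * f s ≤ vmax := by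
    intro f hf
    calc ∑ s, q s * f s ≤ ∑ s, q s * vmax :=
          Finset.sum_le_sum fun s _ => mul_le_mul_of_nonneg_left (hf s) (hq0 s)
    _ = vmax := by rw [← Finset.sum_mul, hq1, one_mul]
  have hμub : μ ≤ vmax := hsum_le g fun s => (abs_le.1 (hg s)).2
  have hμlb : -vmax ≤ μ := by
    have := hsum_le (fun s => -g s) fun s => by
      show -g s ≤ vmax
      have := (abs_le.1 (hg s)).1; linarith
    simp only [mul_neg, Finset.sum_neg_distrib] at this
    linarith
  set p : ℝ := (μ + vmax) / (2 * vmax) with hp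
  have h2v : (0:ℝ) < 2 * vmax := by linarith
  have hp0 : 0 ≤ p := div_nonneg (by linarith) h2v.le
  have hp1 : p ≤ 1 := by
    rw [hp, div_le_one h2v]; linarith
  set u : ℝ := t * (2 * vmax) with hu
  have key : ∀ s, Real.exp (t * (g s - μ)) ≤
      (vmax - g s) / (2 * vmax) * Real.exp (-(p * u)) +
      (g s + vmax) / (2 * vmax) * Real.exp ((1 - p) * u) := by
    intro s
    have hgs := abs_le.1 (hg s)
    have ha : 0 ≤ (vmax - g s) / (2 * vmax) := div_nonneg (by linarith [hgs.2]) h2v.le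
    have hb : 0 ≤ (g s + vmax) / (2 * vmax) := div_nonneg (by linarith [hgs.1]) h2v.le
    have hab : (vmax - g s) / (2 * vmax) + (g s + vmax) / (2 * vmax) = 1 := by
      field_simp; ring
    have hconv := convexOn_exp.2 (Set.mem_univ (t * (-vmax - μ)))
      (Set.mem_univ (t * (vmax - μ))) ha hb hab
    simp only [smul_eq_mul] at hconv
    have he1 : t * (-vmax - μ) = -(p * u) := by
      rw [hp, hu]; field_simp; ring
    have he2 : t * (vmax - μ) = (1 - p) * u := by
      rw [hp, hu]; field_simp; ring
    have hcomb : (vmax - g s) / (2 * vmax) * (t * (-vmax - μ)) +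
        (g s + vmax) / (2 * vmax) * (t * (vmax - μ)) = t * (g s - μ) := by
      field_simp
      ring
    rw [hcomb, he1, he2] at hconv
    exact hconv
  calc ∑ s, q s * Real.exp (t * (g s - μ))
      ≤ ∑ s, q s * ((vmax - g s) / (2 * vmax) * Real.exp (-(p * u)) +
          (g s + vmax) / (2 * vmax) * Real.exp ((1 - p) * u)) :=
        Finset.sum_le_sum fun s _ => mul_le_mul_of_nonneg_left (key s) (hq0 s)
    _ = (1 - p) * Real.exp (-(p * u)) + p * Real.exp ((1 - p) * u) := by
        have hiA : ∑ x, q x * ((vmax - g x) / (2 * vmax) * Real.exp (-(p * u)) +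
            (g x + vmax) / (2 * vmax) * Real.exp ((1 - p) * u))
            = (∑ x, q x * (vmax - g x)) / (2 * vmax) * Real.exp (-(p * u))
              + (∑ x, q x * (g x + vmax)) / (2 * vmax) * Real.exp ((1 - p) * u) := by
          rw [Finset.sum_div, Finset.sum_div, Finset.sum_mul, Finset.sum_mul,
            ← Finset.sum_add_distrib]
          exact Finset.sum_congr rfl fun s _ => by ring
        rw [hiA]
        have h1 : ∑ x, q x * (vmax - g x) = vmax - μ := by
          simp only [mul_sub, Finset.sum_sub_distrib, ← Finset.sum_mul, hq1, one_mul, ← hμ]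
        have h2 : ∑ x, q x * (g x + vmax) = μ + vmax := by
          simp only [mul_add, Finset.sum_add_distrib, ← Finset.sum_mul, hq1, one_mul, ← hμ]
        rw [h1, h2]
        have hpp : (vmax - μ) / (2 * vmax) = 1 - p := by
          rw [hp]; field_simp; ring
        rw [hpp, ← hp]
    _ ≤ Real.exp (u ^ 2 / 8) := aux_L p hp0 hp1 u
    _ = Real.exp (t ^ 2 * vmax ^ 2 / 2) := by
        rw [hu]; congr 1; ring


lemma aux_chernoff_one {σ : Type*} [Fintype σ] (q g : σ → ℝ) (vmax lam μ : ℝ) (c : ℕ)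
    (hv : 0 < vmax) (hlam : 0 < lam)
    (hq0 : ∀ s, 0 ≤ q s) (hq1 : ∑ s, q s = 1) (hg : ∀ s, |g s| ≤ vmax)
    (hμ : μ = ∑ s', q s' * g s') :
    ∑ v ∈ Finset.univ.filter (fun v : Fin c → σ => (c : ℝ) * lam ≤ ∑ i, (g (v i) - μ)),
      ∏ i, q (v i) ≤ Real.exp (-lam ^ 2 * c / (2 * vmax ^ 2)) := by
  classical
  set t : ℝ := lam / vmax ^ 2 with ht
  have hv2 : (0:ℝ) < vmax ^ 2 := pow_pos hv 2
  have ht0 : 0 < t := div_pos hlam hv2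
  set M : ℝ := ∑ s, q s * Real.exp (t * (g s - μ)) with hM
  have hM0 : 0 ≤ M :=
    Finset.sum_nonneg fun s _ => mul_nonneg (hq0 s) (Real.exp_pos _).le
  have hMle : M ≤ Real.exp (t ^ 2 * vmax ^ 2 / 2) := by
    rw [hM, hμ]
    exact aux_mgf q g vmax t hv hq0 hq1 hg
  have hprod : ∀ v : Fin c → σ, ∏ i, (q (v i) * Real.exp (t * (g (v i) - μ)))
      = (∏ i, q (v i)) * Real.exp (t * ∑ i, (g (v i) - μ)) := by
    intro v
    rw [Finset.prod_mul_distrib, ← Real.exp_sum, Finset.mul_sum]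
  calc ∑ v ∈ Finset.univ.filter (fun v : Fin c → σ => (c : ℝ) * lam ≤ ∑ i, (g (v i) - μ)),
        ∏ i, q (v i)
      ≤ ∑ v ∈ Finset.univ.filter (fun v : Fin c → σ => (c : ℝ) * lam ≤ ∑ i, (g (v i) - μ)),
        Real.exp (-(t * ((c : ℝ) * lam))) * ∏ i, (q (v i) * Real.exp (t * (g (v i) - μ))) := by
        apply Finset.sum_le_sum
        intro v hv'
        rw [Finset.mem_filter] at hv'
        rw [hprod v, ← mul_assoc, mul_comm (Real.exp _) (∏ i, q (v i)), mul_assoc,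
          ← Real.exp_add]
        apply le_mul_of_one_le_right (Finset.prod_nonneg fun i _ => hq0 (v i))
        apply Real.one_le_exp
        have := mul_le_mul_of_nonneg_left hv'.2 ht0.le
        linarith
    _ ≤ ∑ v : Fin c → σ,
        Real.exp (-(t * ((c : ℝ) * lam))) * ∏ i, (q (v i) * Real.exp (t * (g (v i) - μ))) := by
        apply Finset.sum_le_sum_of_subset_of_nonneg (Finset.filter_subset _ _)
        intro v _ _
        exact mul_nonneg (Real.exp_pos _).le (Finset.prod_nonneg fun i _ =>
          mul_nonneg (hq0 (v i)) (Real.exp_pos _).le)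
    _ = Real.exp (-(t * ((c : ℝ) * lam))) * M ^ c := by
        rw [← Finset.mul_sum]
        congr 1
        rw [hM, Fintype.sum_pow]
    _ ≤ Real.exp (-(t * ((c : ℝ) * lam))) * Real.exp (t ^ 2 * vmax ^ 2 / 2) ^ c :=
        mul_le_mul_of_nonneg_left (pow_le_pow_left₀ hM0 hMle c) (Real.exp_pos _).le
    _ = Real.exp (-(t * ((c : ℝ) * lam)) + c * (t ^ 2 * vmax ^ 2 / 2)) := by
        rw [Real.exp_add, ← Real.exp_nat_mul]
    _ = Real.exp (-lam ^ 2 * c / (2 * vmax ^ 2)) := by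
        congr 1
        rw [ht]
        field_simp
        ring


lemma aux_chernoff {σ : Type*} [Fintype σ] (q g : σ → ℝ) (vmax lam μ : ℝ) (c : ℕ)
    (hc : 1 ≤ c) (hv : 0 < vmax) (hlam : 0 < lam)
    (hq0 : ∀ s, 0 ≤ q s) (hq1 : ∑ s, q s = 1) (hg : ∀ s, |g s| ≤ vmax)
    (hμ : μ = ∑ s', q s' * g s') :
    ∑ v ∈ Finset.univ.filter (fun v : Fin c → σ =>
        ¬ |(1 / c : ℝ) * ∑ i, g (v i) - μ| ≤ lam), ∏ i, q (v i)
      ≤ 2 * Real.exp (-lam ^ 2 * c / (2 * vmax ^ 2)) := by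
  classical
  have hcR : (0:ℝ) < c := by exact_mod_cast hc
  have hsum : ∀ v : Fin c → σ, ∑ i, (g (v i) - μ) = (∑ i, g (v i)) - c * μ := by
    intro v
    rw [Finset.sum_sub_distrib, Finset.sum_const, Finset.card_univ, Fintype.card_fin,
      nsmul_eq_mul]
  have hsub : Finset.univ.filter (fun v : Fin c → σ =>
        ¬ |(1 / c : ℝ) * ∑ i, g (v i) - μ| ≤ lam)
      ⊆ Finset.univ.filter (fun v : Fin c → σ => (c : ℝ) * lam ≤ ∑ i, (g (v i) - μ))
        ∪ Finset.univ.filter (fun v : Fin c → σ => (c : ℝ) * lam ≤ ∑ i, (-g (v i) - -μ)) := by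
    intro v hv'
    rw [Finset.mem_filter] at hv'
    rw [Finset.mem_union, Finset.mem_filter, Finset.mem_filter]
    have h1 := lt_abs.mp (not_le.mp hv'.2)
    have hs2 : ∑ i, (-g (v i) - -μ) = -((∑ i, g (v i)) - c * μ) := by
      rw [Finset.sum_sub_distrib, Finset.sum_neg_distrib, Finset.sum_const, Finset.card_univ,
        Fintype.card_fin, nsmul_eq_mul]
      ring
    rcases h1 with h1 | h1
    · left
      refine ⟨Finset.mem_univ _, ?_⟩
      rw [hsum]
      have := mul_lt_mul_of_pos_left h1 hcR
      rw [mul_sub] at this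
      have hcc : (c:ℝ) * ((1 / c : ℝ) * ∑ i, g (v i)) = ∑ i, g (v i) := by
        field_simp
      rw [hcc] at this
      linarith
    · right
      refine ⟨Finset.mem_univ _, ?_⟩
      rw [hs2]
      have := mul_lt_mul_of_pos_left h1 hcR
      rw [mul_neg, mul_sub] at this
      have hcc : (c:ℝ) * ((1 / c : ℝ) * ∑ i, g (v i)) = ∑ i, g (v i) := by
        field_simp
      rw [hcc] at this
      linarith
  have hnn : ∀ v : Fin c → σ, 0 ≤ ∏ i, q (v i) :=
    fun v => Finset.prod_nonneg fun i _ => hq0 (v i)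
  have h2 := aux_chernoff_one q (fun s => -g s) vmax lam (-μ) c hv hlam hq0 hq1
    (fun s => by simpa using hg s)
    (by rw [hμ]; simp [mul_neg, ← Finset.sum_neg_distrib])
  have h1 := aux_chernoff_one q g vmax lam μ c hv hlam hq0 hq1 hg hμ
  have hUI := Finset.sum_union_inter (s₁ := Finset.univ.filter (fun v : Fin c → σ =>
      (c : ℝ) * lam ≤ ∑ i, (g (v i) - μ)))
    (s₂ := Finset.univ.filter (fun v : Fin c → σ => (c : ℝ) * lam ≤ ∑ i, (-g (v i) - -μ)))
    (f := fun v => ∏ i, q (v i))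
  have hInn : 0 ≤ ∑ v ∈ (Finset.univ.filter (fun v : Fin c → σ =>
      (c : ℝ) * lam ≤ ∑ i, (g (v i) - μ)) ∩ Finset.univ.filter (fun v : Fin c → σ =>
      (c : ℝ) * lam ≤ ∑ i, (-g (v i) - -μ))), ∏ i, q (v i) :=
    Finset.sum_nonneg fun v _ => hnn v
  have hstep := Finset.sum_le_sum_of_subset_of_nonneg hsub (fun v _ _ => hnn v)
  calc ∑ v ∈ Finset.univ.filter (fun v : Fin c → σ =>
        ¬ |(1 / c : ℝ) * ∑ i, g (v i) - μ| ≤ lam), ∏ i, q (v i)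
      ≤ ∑ v ∈ (Finset.univ.filter (fun v : Fin c → σ =>
          (c : ℝ) * lam ≤ ∑ i, (g (v i) - μ))
        ∪ Finset.univ.filter (fun v : Fin c → σ =>
          (c : ℝ) * lam ≤ ∑ i, (-g (v i) - -μ))), ∏ i, q (v i) := hstep
    _ ≤ 2 * Real.exp (-lam ^ 2 * c / (2 * vmax ^ 2)) := by
        have := h1
        have := h2
        beta_reduce at h2
        linarith


section Meas
variable {Ω : Type*} [MeasureSpace Ω] [IsProbabilityMeasure (volume : Measure Ω)]
  {ι : Type*} {S : Type*} [Fintype S] [MeasurableSpace S] [MeasurableSingletonClass S]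
  (X : ι → Ω → S)

lemma aux_prod (hmeas : ∀ j, Measurable (X j))
    (hindep : iIndepFun X volume)
    {γ : Type*} [Fintype γ] (e : γ → ι) (he : Function.Injective e) (w : γ → S) :
    volume (⋂ g, X (e g) ⁻¹' {w g}) = ∏ g, volume (X (e g) ⁻¹' {w g}) := by
  classical
  rcases isEmpty_or_nonempty γ with hγ | hγ
  · simp [Set.iInter_of_empty, Finset.univ_eq_empty]
  · have hinv : ∀ g, Function.invFun e (e g) = g := fun g => Function.leftInverse_invFun he g
    set sets : ι → Set S := fun j => {w (Function.invFun e j)} with hsets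
    have h := hindep.measure_inter_preimage_eq_mul (Finset.univ.image e) (sets := sets)
      (fun i _ => measurableSet_singleton _)
    have h1 : (⋂ j ∈ Finset.univ.image e, X j ⁻¹' sets j) = ⋂ g, X (e g) ⁻¹' {w g} := by
      ext ω
      simp only [Set.mem_iInter, Finset.mem_image, Finset.mem_univ, true_and]
      constructor
      · intro hj g
        have := hj (e g) ⟨g, rfl⟩
        simpa [hsets, hinv] using this
      · rintro hg j ⟨g, rfl⟩
        simpa [hsets, hinv] using hg g
    have h2 : ∏ j ∈ Finset.univ.image e, volume (X j ⁻¹' sets j)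
        = ∏ g, volume (X (e g) ⁻¹' {w g}) := by
      rw [Finset.prod_image (fun a _ b _ hab => he hab)]
      exact Finset.prod_congr rfl fun g _ => by rw [hsets]; simp [hinv]
    rw [← h1, h, h2]

lemma aux_atom_meas {γ : Type*} [Fintype γ] (hmeas : ∀ j, Measurable (X j))
    (e : γ → ι) (w : γ → S) : MeasurableSet (⋂ g, X (e g) ⁻¹' {w g}) :=
  MeasurableSet.iInter fun g => hmeas (e g) (measurableSet_singleton _)

lemma aux_partition {γ : Type*} [Fintype γ] [DecidableEq γ] (e : γ → ι) (Q : (γ → S) → Prop)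
    [DecidablePred Q] :
    {ω | Q fun g => X (e g) ω} = ⋃ v ∈ Finset.univ.filter Q, ⋂ g, X (e g) ⁻¹' {v g} := by
  ext ω
  simp only [Set.mem_setOf_eq, Set.mem_iUnion, Finset.mem_filter, Finset.mem_univ, true_and,
    Set.mem_iInter, Set.mem_preimage, Set.mem_singleton_iff]
  constructor
  · intro hQ
    exact ⟨fun g => X (e g) ω, hQ, fun g => rfl⟩
  · rintro ⟨v, hQ, hv⟩
    have : (fun g => X (e g) ω) = v := funext fun g => hv g
    rwa [this]

lemma aux_disj {γ : Type*} [Fintype γ] (e : γ → ι) :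
    (Set.univ : Set (γ → S)).PairwiseDisjoint fun v => ⋂ g, X (e g) ⁻¹' {v g} := by
  intro v _ v' _ hvv'
  rw [Function.onFun, Set.disjoint_left]
  intro ω hω hω'
  apply hvv'
  funext g
  simp only [Set.mem_iInter, Set.mem_preimage, Set.mem_singleton_iff] at hω hω'
  rw [← hω g, ← hω' g]

lemma aux_meas_eq (hmeas : ∀ j, Measurable (X j))
    (hindep : iIndepFun X volume)
    {γ : Type*} [Fintype γ] [DecidableEq γ] (e : γ → ι) (he : Function.Injective e) (Q : (γ → S) → Prop)
    [DecidablePred Q] :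
    volume {ω | Q fun g => X (e g) ω}
      = ∑ v ∈ Finset.univ.filter Q, ∏ g, volume (X (e g) ⁻¹' {v g}) := by
  rw [aux_partition X e Q]
  rw [measure_biUnion_finset ((aux_disj X e).subset (Set.subset_univ _))
    (fun v _ => aux_atom_meas X hmeas e v)]
  exact Finset.sum_congr rfl fun v _ => aux_prod X hmeas hindep e he v

lemma aux_split (hmeas : ∀ j, Measurable (X j))
    (hindep : iIndepFun X volume)
    {γ : Type*} [Fintype γ] [DecidableEq γ] (e : γ → ι) (he : Function.Injective e)
    (j0 : ι) (hj0 : ∀ g, e g ≠ j0) (s' : S) (Q : (γ → S) → Prop) [DecidablePred Q] :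
    volume ({ω | X j0 ω = s'} ∩ {ω | Q fun g => X (e g) ω})
      = volume {ω | X j0 ω = s'} * volume {ω | Q fun g => X (e g) ω} := by
  classical
  set e' : Option γ → ι := fun o => Option.elim o j0 e with he'def
  have he' : Function.Injective e' := by
    intro o o' hoo'
    cases o with
    | none => cases o' with
      | none => rfl
      | some g => exact absurd hoo'.symm (hj0 g)
    | some g => cases o' with
      | none => exact absurd hoo' (hj0 g)
      | some g' => exact congrArg _ (he hoo')
  have hatom : ∀ v : γ → S, {ω | X j0 ω = s'} ∩ (⋂ g, X (e g) ⁻¹' {v g})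
      = ⋂ o : Option γ, X (e' o) ⁻¹' {Option.elim o s' v} := by
    intro v
    ext ω
    simp only [Set.mem_inter_iff, Set.mem_setOf_eq, Set.mem_iInter, Set.mem_preimage,
      Set.mem_singleton_iff, Option.forall]
    constructor
    · rintro ⟨h1, h2⟩; exact ⟨h1, h2⟩
    · rintro ⟨h1, h2⟩; exact ⟨h1, h2⟩
  have hvol : ∀ v : γ → S, volume ({ω | X j0 ω = s'} ∩ (⋂ g, X (e g) ⁻¹' {v g}))
      = volume {ω | X j0 ω = s'} * ∏ g, volume (X (e g) ⁻¹' {v g}) := by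
    intro v
    rw [hatom v, aux_prod X hmeas hindep e' he' (fun o => Option.elim o s' v),
      Fintype.prod_option]
    rfl
  have hdisj2 : (↑(Finset.univ.filter Q) : Set (γ → S)).PairwiseDisjoint
      fun v => {ω | X j0 ω = s'} ∩ ⋂ g, X (e g) ⁻¹' {v g} := by
    intro v hv v' hv' hvv'
    exact ((aux_disj X e) (Set.mem_univ v) (Set.mem_univ v') hvv').mono
      Set.inter_subset_right Set.inter_subset_right
  have hm2 : ∀ v ∈ Finset.univ.filter Q,
      MeasurableSet ({ω | X j0 ω = s'} ∩ ⋂ g, X (e g) ⁻¹' {v g}) := fun v _ =>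
    ((hmeas j0) (measurableSet_singleton s')).inter (aux_atom_meas X hmeas e v)
  rw [aux_partition X e Q, Set.inter_iUnion₂, measure_biUnion_finset hdisj2 hm2,
    measure_biUnion_finset ((aux_disj X e).subset (Set.subset_univ _))
      (fun v _ => aux_atom_meas X hmeas e v), Finset.mul_sum]
  exact Finset.sum_congr rfl fun v _ => by
    rw [hvol v, aux_prod X hmeas hindep e he v]

end Meas


section Game
variable {S A : Type*} [Fintype S] [Fintype A] [Nonempty A]

open Classical in
noncomputable def mcmsW (T : Set S) (τ : S → Fin 2) (h : S → ℝ) (c : ℕ) :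
    ℕ → List (A × Fin c) → S → ((List (A × Fin c) × S × A × Fin c) → S) → ℝ
  | 0, _, s, _ => h s
  | d + 1, p, s, x =>
    if s ∈ T then h s
    else if τ s = 0 then
      Finset.univ.sup' Finset.univ_nonempty (fun a : A =>
        (1 / c : ℝ) * ∑ i : Fin c, mcmsW T τ h c d ((a, i) :: p) (x (p, s, a, i)) x)
    else
      Finset.univ.inf' Finset.univ_nonempty (fun a : A =>
        (1 / c : ℝ) * ∑ i : Fin c, mcmsW T τ h c d ((a, i) :: p) (x (p, s, a, i)) x)

open Classical in
lemma mcmsW_zero (T : Set S) (τ : S → Fin 2) (h : S → ℝ) (c : ℕ) (p : List (A × Fin c))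
    (s : S) (x : (List (A × Fin c) × S × A × Fin c) → S) :
    mcmsW T τ h c 0 p s x = h s := rfl

open Classical in
lemma mcmsW_succ (T : Set S) (τ : S → Fin 2) (h : S → ℝ) (c : ℕ) (d : ℕ)
    (p : List (A × Fin c)) (s : S) (x : (List (A × Fin c) × S × A × Fin c) → S) :
    mcmsW T τ h c (d + 1) p s x =
    if s ∈ T then h s
    else if τ s = 0 then
      Finset.univ.sup' Finset.univ_nonempty (fun a : A =>
        (1 / c : ℝ) * ∑ i : Fin c, mcmsW T τ h c d ((a, i) :: p) (x (p, s, a, i)) x)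
    else
      Finset.univ.inf' Finset.univ_nonempty (fun a : A =>
        (1 / c : ℝ) * ∑ i : Fin c, mcmsW T τ h c d ((a, i) :: p) (x (p, s, a, i)) x) := by
  rfl

open Classical in
noncomputable def mcmsK (S : Type*) [Fintype S] (A : Type*) [Fintype A] (c : ℕ) :
    ℕ → List (A × Fin c) → Finset (List (A × Fin c) × S × A × Fin c)
  | 0, _ => ∅
  | d + 1, p =>
    ((Finset.univ : Finset (S × A × Fin c)).image fun z => (p, z)) ∪
      (Finset.univ : Finset (A × Fin c)).biUnion fun ai => mcmsK S A c d (ai :: p)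

open Classical in
lemma mcmsK_succ (c d : ℕ) (p : List (A × Fin c)) :
    mcmsK S A c (d + 1) p =
    ((Finset.univ : Finset (S × A × Fin c)).image fun z => (p, z)) ∪
      (Finset.univ : Finset (A × Fin c)).biUnion fun ai => mcmsK S A c d (ai :: p) := rfl

lemma mcmsK_length {c : ℕ} : ∀ {d : ℕ} {p : List (A × Fin c)}
    (j : List (A × Fin c) × S × A × Fin c), j ∈ mcmsK S A c d p → p.length ≤ j.1.length := by
  classical
  intro d
  induction d with
  | zero => intro p j hj; simp [mcmsK] at hj
  | succ d ih =>
    intro p j hj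
    rw [mcmsK_succ, Finset.mem_union] at hj
    rcases hj with hj | hj
    · rw [Finset.mem_image] at hj
      obtain ⟨z, _, rfl⟩ := hj
      exact le_refl _
    · rw [Finset.mem_biUnion] at hj
      obtain ⟨ai, _, hj⟩ := hj
      have := ih j hj
      simp only [List.length_cons] at this
      omega

lemma mcmsW_congr (T : Set S) (τ : S → Fin 2) (h : S → ℝ) (c : ℕ) :
    ∀ {d : ℕ} {p : List (A × Fin c)} {s : S}
      {x y : (List (A × Fin c) × S × A × Fin c) → S},
      (∀ j ∈ mcmsK S A c d p, x j = y j) → mcmsW T τ h c d p s x = mcmsW T τ h c d p s y := by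
  classical
  intro d
  induction d with
  | zero => intro p s x y _; rfl
  | succ d ih =>
    intro p s x y hxy
    classical
    have harg : ∀ (a : A) (i : Fin c), x (p, s, a, i) = y (p, s, a, i) := by
      intro a i
      apply hxy
      rw [mcmsK_succ, Finset.mem_union]
      left
      exact Finset.mem_image.2 ⟨(s, a, i), Finset.mem_univ _, rfl⟩
    have hrec : ∀ (a : A) (i : Fin c) (t : S),
        mcmsW T τ h c d ((a, i) :: p) t x = mcmsW T τ h c d ((a, i) :: p) t y := by
      intro a i t
      apply ih
      intro j hj
      apply hxy
      rw [mcmsK_succ, Finset.mem_union]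
      right
      exact Finset.mem_biUnion.2 ⟨(a, i), Finset.mem_univ _, hj⟩
    have hfun : (fun a : A => (1 / c : ℝ) * ∑ i : Fin c,
          mcmsW T τ h c d ((a, i) :: p) (x (p, s, a, i)) x)
        = (fun a : A => (1 / c : ℝ) * ∑ i : Fin c,
          mcmsW T τ h c d ((a, i) :: p) (y (p, s, a, i)) y) := by
      funext a
      congr 1
      apply Finset.sum_congr rfl
      intro i _
      rw [harg a i, hrec a i _]
    rw [mcmsW_succ, mcmsW_succ, hfun]

lemma sup'_abs_le {M : ℝ} {f : A → ℝ} (hf : ∀ a, |f a| ≤ M) :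
    |Finset.univ.sup' Finset.univ_nonempty f| ≤ M := by
  rw [abs_le]
  obtain ⟨a0⟩ := (inferInstance : Nonempty A)
  constructor
  · exact le_trans (abs_le.1 (hf a0)).1 (Finset.le_sup' f (Finset.mem_univ a0))
  · exact Finset.sup'_le _ _ fun a _ => (abs_le.1 (hf a)).2

lemma inf'_abs_le {M : ℝ} {f : A → ℝ} (hf : ∀ a, |f a| ≤ M) :
    |Finset.univ.inf' Finset.univ_nonempty f| ≤ M := by
  rw [abs_le]
  obtain ⟨a0⟩ := (inferInstance : Nonempty A)
  constructor
  · exact Finset.le_inf' _ _ fun a _ => (abs_le.1 (hf a)).1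
  · exact le_trans (Finset.inf'_le f (Finset.mem_univ a0)) (abs_le.1 (hf a0)).2

lemma sup'_sub_abs {e : ℝ} {f g : A → ℝ} (hfg : ∀ a, |f a - g a| ≤ e) :
    |Finset.univ.sup' Finset.univ_nonempty f - Finset.univ.sup' Finset.univ_nonempty g| ≤ e := by
  rw [abs_le]
  constructor
  · rw [neg_le, neg_sub]
    rw [sub_le_iff_le_add]
    apply Finset.sup'_le
    intro a _
    have h1 := (abs_le.1 (hfg a)).1
    have h2 := Finset.le_sup' f (Finset.mem_univ a)
    linarith
  · rw [sub_le_iff_le_add]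
    apply Finset.sup'_le
    intro a _
    have h1 := (abs_le.1 (hfg a)).2
    have h2 := Finset.le_sup' g (Finset.mem_univ a)
    linarith

lemma inf'_sub_abs {e : ℝ} {f g : A → ℝ} (hfg : ∀ a, |f a - g a| ≤ e) :
    |Finset.univ.inf' Finset.univ_nonempty f - Finset.univ.inf' Finset.univ_nonempty g| ≤ e := by
  rw [abs_le]
  constructor
  · rw [neg_le, neg_sub]
    obtain ⟨a, _, ha⟩ := Finset.exists_mem_eq_inf' (Finset.univ_nonempty (α := A)) f
    rw [ha, sub_le_iff_le_add]
    have h1 := Finset.inf'_le g (Finset.mem_univ a)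
    have := (abs_le.1 (hfg a)).1
    linarith
  · obtain ⟨a, _, ha⟩ := Finset.exists_mem_eq_inf' (Finset.univ_nonempty (α := A)) g
    rw [ha, sub_le_iff_le_add]
    have h1 := Finset.inf'_le f (Finset.mem_univ a)
    have := (abs_le.1 (hfg a)).2
    linarith

lemma avg_abs_le {c : ℕ} (hc : 1 ≤ c) {e : ℝ} {f : Fin c → ℝ} (hf : ∀ i, |f i| ≤ e) :
    |(1 / c : ℝ) * ∑ i, f i| ≤ e := by
  have hcR : (0:ℝ) < c := by exact_mod_cast hc
  rw [abs_mul]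
  have h1 : |(1 / c : ℝ)| = 1 / c := abs_of_pos (by positivity)
  rw [h1]
  calc (1 / c : ℝ) * |∑ i, f i| ≤ (1 / c : ℝ) * ∑ i, |f i| := by
        apply mul_le_mul_of_nonneg_left (Finset.abs_sum_le_sum_abs _ _) (by positivity)
    _ ≤ (1 / c : ℝ) * ∑ _i : Fin c, e := by
        apply mul_le_mul_of_nonneg_left (Finset.sum_le_sum fun i _ => hf i) (by positivity)
    _ = e := by
        rw [Finset.sum_const, Finset.card_univ, Fintype.card_fin, nsmul_eq_mul]
        field_simp

lemma mcmsW_bound (T : Set S) (τ : S → Fin 2) (h : S → ℝ) (c : ℕ) (hc : 1 ≤ c)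
    {vmax : ℝ} (hh : ∀ s, |h s| ≤ vmax) :
    ∀ (d : ℕ) (p : List (A × Fin c)) (s : S) (x : (List (A × Fin c) × S × A × Fin c) → S),
      |mcmsW T τ h c d p s x| ≤ vmax := by
  intro d
  induction d with
  | zero => intro p s x; exact hh s
  | succ d ih =>
    intro p s x
    classical
    rw [mcmsW_succ]
    split
    · exact hh s
    · have hpera : ∀ a : A, |(1 / c : ℝ) * ∑ i : Fin c,
          mcmsW T τ h c d ((a, i) :: p) (x (p, s, a, i)) x| ≤ vmax := by
        intro a
        exact avg_abs_le hc fun i => ih _ _ _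
      split
      · exact sup'_abs_le hpera
      · exact inf'_abs_le hpera

end Game
/-- Theorem 1 of the paper: sparse sampling accuracy for adversarial games.
`samp p s a i` is the `i`-th successor state sampled from `P(·|s,a)` at the tree node
identified by the path `p` from the root; all these samples are mutually independent.
`V` is the depth-`d` minimax value and `Vhat` the sparse-sampling estimator. -/
theorem mcms_sparse_sampling {Ω : Type*} [MeasureSpace Ω]
    [IsProbabilityMeasure (volume : Measure Ω)]
    {S A : Type*} [Fintype S] [MeasurableSpace S] [MeasurableSingletonClass S]
    [Fintype A] [Nonempty A]
    (T : Set S) (P : S → A → S → ℝ) (τ : S → Fin 2) (h : S → ℝ)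
    (hP0 : ∀ s a s', 0 ≤ P s a s') (hP1 : ∀ s a, ∑ s', P s a s' = 1)
    (c : ℕ) (hc : 1 ≤ c) (vmax : ℝ) (hvmax : 0 < vmax)
    (hh : ∀ s, -vmax ≤ h s ∧ h s ≤ vmax)
    -- the true depth-d minimax values
    (V : ℕ → S → ℝ)
    (hV0 : ∀ s, V 0 s = h s)
    (hVT : ∀ d s, s ∈ T → V (d + 1) s = h s)
    (hVmax : ∀ d s, s ∉ T → τ s = 0 →
      V (d + 1) s = Finset.univ.sup' Finset.univ_nonempty
        (fun a : A => ∑ s', P s a s' * V d s'))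
    (hVmin : ∀ d s, s ∉ T → τ s = 1 →
      V (d + 1) s = Finset.univ.inf' Finset.univ_nonempty
        (fun a : A => ∑ s', P s a s' * V d s'))
    -- the sampling scheme: independent samples, each distributed according to P(·|s,a)
    (samp : List (A × Fin c) → S → A → Fin c → Ω → S)
    (hmeas : ∀ p s a i, Measurable (samp p s a i))
    (hindep : iIndepFun
      (fun (q : List (A × Fin c) × S × A × Fin c) ω => samp q.1 q.2.1 q.2.2.1 q.2.2.2 ω) volume)
    (hdist : ∀ p s a i s', volume {ω | samp p s a i ω = s'} = ENNReal.ofReal (P s a s'))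
    -- the sparse-sampling estimator
    (Vhat : ℕ → List (A × Fin c) → S → Ω → ℝ)
    (hVhat0 : ∀ p s ω, Vhat 0 p s ω = h s)
    (hVhatT : ∀ d p s ω, s ∈ T → Vhat (d + 1) p s ω = h s)
    (hVhatMax : ∀ d p s ω, s ∉ T → τ s = 0 →
      Vhat (d + 1) p s ω = Finset.univ.sup' Finset.univ_nonempty
        (fun a : A => (1 / c : ℝ) * ∑ i : Fin c, Vhat d ((a, i) :: p) (samp p s a i ω) ω))
    (hVhatMin : ∀ d p s ω, s ∉ T → τ s = 1 →
      Vhat (d + 1) p s ω = Finset.univ.inf' Finset.univ_nonempty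
        (fun a : A => (1 / c : ℝ) * ∑ i : Fin c, Vhat d ((a, i) :: p) (samp p s a i ω) ω)) :
    ∀ (s : S) (lam : ℝ), 0 < lam → lam ≤ 2 * vmax → ∀ d : ℕ,
      1 - ((2 * c * Fintype.card A : ℕ) : ENNReal) ^ d *
          ENNReal.ofReal (Real.exp (-lam ^ 2 * c / (2 * vmax ^ 2))) ≤
        volume {ω | |Vhat d ([] : List (A × Fin c)) s ω - V d s| ≤ lam * d} := by
  classical
  intro s0 lam hlam _hlam2 d0
  haveI : Nonempty S := ⟨s0⟩
  set ε : ENNReal := ENNReal.ofReal (Real.exp (-lam ^ 2 * c / (2 * vmax ^ 2))) with hε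
  set X : (List (A × Fin c) × S × A × Fin c) → Ω → S :=
    fun j ω => samp j.1 j.2.1 j.2.2.1 j.2.2.2 ω with hXdef
  have hmeasX : ∀ j, Measurable (X j) := fun j => hmeas _ _ _ _
  have hindepX : iIndepFun
      X volume := hindep
  have habs : ∀ s, |h s| ≤ vmax := fun s => abs_le.2 ⟨(hh s).1, (hh s).2⟩
  have hcR : (0:ℝ) < c := by exact_mod_cast hc
  have hA1 : 1 ≤ Fintype.card A := Fintype.card_pos
  have hτcases : ∀ s : S, τ s ≠ 0 → τ s = 1 := by
    intro s hτ
    have h2 := (τ s).isLt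
    have h0 : (τ s).val ≠ 0 := fun h' => hτ (Fin.val_injective h')
    apply Fin.val_injective
    simp only [Fin.val_one]
    omega
  -- Vhat equals the deterministic recursion applied to the samples
  have hWX : ∀ (d : ℕ) (p : List (A × Fin c)) (s : S) (ω : Ω),
      Vhat d p s ω = mcmsW T τ h c d p s (fun j => X j ω) := by
    intro d
    induction d with
    | zero => intro p s ω; rw [hVhat0, mcmsW_zero]
    | succ d ih =>
      intro p s ω
      by_cases hT : s ∈ T
      · rw [hVhatT d p s ω hT, mcmsW_succ, if_pos hT]
      · have hfun : (fun a : A => (1 / c : ℝ) * ∑ i : Fin c,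
            Vhat d ((a, i) :: p) (samp p s a i ω) ω)
            = (fun a : A => (1 / c : ℝ) * ∑ i : Fin c, mcmsW T τ h c d ((a, i) :: p)
              ((fun j => X j ω) (p, s, a, i)) (fun j => X j ω)) := by
          funext a
          congr 1
          exact Finset.sum_congr rfl fun i _ => ih _ _ _
        by_cases hτ0 : τ s = 0
        · rw [hVhatMax d p s ω hT hτ0, mcmsW_succ, if_neg hT, if_pos hτ0, hfun]
        · rw [hVhatMin d p s ω hT (hτcases s hτ0), mcmsW_succ, if_neg hT, if_neg hτ0, hfun]
  -- V is bounded
  have hVb : ∀ (d : ℕ) (s : S), |V d s| ≤ vmax := by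
    intro d
    induction d with
    | zero => intro s; rw [hV0]; exact habs s
    | succ d ih =>
      intro s
      by_cases hT : s ∈ T
      · rw [hVT d s hT]; exact habs s
      · have hper : ∀ a : A, |∑ s', P s a s' * V d s'| ≤ vmax := by
          intro a
          calc |∑ s', P s a s' * V d s'| ≤ ∑ s', |P s a s' * V d s'| :=
                Finset.abs_sum_le_sum_abs _ _
          _ ≤ ∑ s', P s a s' * vmax := by
              apply Finset.sum_le_sum
              intro s' _
              rw [abs_mul, abs_of_nonneg (hP0 s a s')]
              exact mul_le_mul_of_nonneg_left (ih s') (hP0 s a s')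
          _ = vmax := by rw [← Finset.sum_mul, hP1, one_mul]
        by_cases hτ0 : τ s = 0
        · rw [hVmax d s hT hτ0]; exact sup'_abs_le hper
        · rw [hVmin d s hT (hτcases s hτ0)]; exact inf'_abs_le hper
  -- key induction: bound on the bad event
  have key : ∀ (d : ℕ) (p : List (A × Fin c)) (s : S),
      volume {ω | ¬ |Vhat d p s ω - V d s| ≤ lam * d} ≤
      2 * (Fintype.card A : ENNReal) * ε *
        ∑ k ∈ Finset.range d, ((c * Fintype.card A : ℕ) : ENNReal) ^ k := by
    intro d
    induction d with
    | zero =>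
      intro p s
      have hempty : {ω : Ω | ¬ |Vhat 0 p s ω - V 0 s| ≤ lam * ((0:ℕ):ℝ)} = ∅ := by
        ext ω
        simp [hVhat0, hV0]
      rw [hempty, measure_empty]
      exact zero_le
    | succ d ih =>
      intro p s
      by_cases hT : s ∈ T
      · have hempty : {ω : Ω | ¬ |Vhat (d+1) p s ω - V (d+1) s| ≤ lam * ((d+1:ℕ):ℝ)} = ∅ := by
          ext ω
          simp only [Set.mem_setOf_eq, Set.mem_empty_iff_false, iff_false, not_not]
          rw [hVhatT d p s ω hT, hVT d s hT, sub_self, abs_zero]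
          exact mul_nonneg hlam.le (Nat.cast_nonneg _)
        rw [hempty, measure_empty]
        exact zero_le
      · set G : ENNReal := 2 * (Fintype.card A : ENNReal) * ε *
          ∑ k ∈ Finset.range d, ((c * Fintype.card A : ℕ) : ENNReal) ^ k with hG
        set μf : A → ℝ := fun a => ∑ s', P s a s' * V d s' with hμf
        set Hset : A → Set Ω := fun a =>
          {ω | ¬ |(1 / c : ℝ) * ∑ i : Fin c, V d (samp p s a i ω) - μf a| ≤ lam} with hHset
        set Bd : A → Fin c → S → Set Ω := fun a i s' =>
          {ω : Ω | ¬ |Vhat d ((a, i) :: p) s' ω - V d s'| ≤ lam * d} with hBdd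
        set USet : A → Set Ω := fun a => ⋃ i ∈ (Finset.univ : Finset (Fin c)),
          ⋃ s' ∈ (Finset.univ : Finset S),
            ({ω : Ω | X (p, s, a, i) ω = s'} ∩ Bd a i s') with hUSet
        -- pointwise inclusion into the union of bad events
        have hsub : {ω : Ω | ¬ |Vhat (d+1) p s ω - V (d+1) s| ≤ lam * ((d+1:ℕ):ℝ)} ⊆
            ⋃ a ∈ (Finset.univ : Finset A), (Hset a ∪ USet a) := by
          intro ω hω
          simp only [Set.mem_setOf_eq] at hω
          have hexa : ∃ a : A, ¬ |(1 / c : ℝ) * ∑ i : Fin c,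
              Vhat d ((a, i) :: p) (samp p s a i ω) ω - μf a| ≤ lam * ((d+1:ℕ):ℝ) := by
            by_contra hcon
            push_neg at hcon
            apply hω
            by_cases hτ0 : τ s = 0
            · rw [hVhatMax d p s ω hT hτ0, hVmax d s hT hτ0]
              exact sup'_sub_abs hcon
            · rw [hVhatMin d p s ω hT (hτcases s hτ0), hVmin d s hT (hτcases s hτ0)]
              exact inf'_sub_abs hcon
          obtain ⟨a, ha⟩ := hexa
          by_cases hH : ω ∈ Hset a
          · simp only [Set.mem_iUnion]
            exact ⟨a, Finset.mem_univ a, Or.inl hH⟩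
          · have hmid : |(1 / c : ℝ) * ∑ i : Fin c, V d (samp p s a i ω) - μf a| ≤ lam := by
              by_contra hmid'
              exact hH hmid'
            have hdiff : ∃ i : Fin c,
                ¬ |Vhat d ((a, i) :: p) (samp p s a i ω) ω - V d (samp p s a i ω)| ≤
                  lam * (d:ℝ) := by
              by_contra hcon2
              push_neg at hcon2
              apply ha
              have havg : |(1 / c : ℝ) * ∑ i : Fin c, Vhat d ((a, i) :: p) (samp p s a i ω) ω
                  - (1 / c : ℝ) * ∑ i : Fin c, V d (samp p s a i ω)| ≤ lam * (d:ℝ) := by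
                rw [← mul_sub, ← Finset.sum_sub_distrib]
                exact avg_abs_le hc fun i => hcon2 i
              have htri := abs_sub_le
                ((1 / c : ℝ) * ∑ i : Fin c, Vhat d ((a, i) :: p) (samp p s a i ω) ω)
                ((1 / c : ℝ) * ∑ i : Fin c, V d (samp p s a i ω)) (μf a)
              push_cast
              push_cast at htri havg hmid
              linarith
            obtain ⟨i, hi⟩ := hdiff
            simp only [Set.mem_iUnion]
            refine ⟨a, Finset.mem_univ a, Or.inr ?_⟩
            simp only [hUSet, Set.mem_iUnion]
            exact ⟨i, Finset.mem_univ i, samp p s a i ω, Finset.mem_univ _, rfl, hi⟩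
        -- bound on Hset via Chernoff
        have hHbound : ∀ a : A, volume (Hset a) ≤ 2 * ε := by
          intro a
          have hinj : Function.Injective
              (fun i : Fin c => ((p, s, a, i) : List (A × Fin c) × S × A × Fin c)) := by
            intro i i' hii'
            simpa using congrArg (fun j : List (A × Fin c) × S × A × Fin c => j.2.2.2) hii'
          have hQ : Hset a = {ω | (fun v : Fin c → S =>
              ¬ |(1 / c : ℝ) * ∑ i : Fin c, V d (v i) - μf a| ≤ lam)
              (fun i => X ((fun i : Fin c =>
                ((p, s, a, i) : List (A × Fin c) × S × A × Fin c)) i) ω)} := rfl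
          have hconv : ∀ v : Fin c → S, ∏ i : Fin c,
              volume (X ((p, s, a, i) : List (A × Fin c) × S × A × Fin c) ⁻¹' {v i})
              = ENNReal.ofReal (∏ i : Fin c, P s a (v i)) := by
            intro v
            rw [ENNReal.ofReal_prod_of_nonneg (fun i _ => hP0 s a (v i))]
            exact Finset.prod_congr rfl fun i _ => hdist p s a i (v i)
          calc volume (Hset a)
              = ∑ v ∈ Finset.univ.filter (fun v : Fin c → S =>
                  ¬ |(1 / c : ℝ) * ∑ i : Fin c, V d (v i) - μf a| ≤ lam),
                ∏ i : Fin c, volume (X ((p, s, a, i) :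
                  List (A × Fin c) × S × A × Fin c) ⁻¹' {v i}) := by
                rw [hQ]
                exact aux_meas_eq X hmeasX hindepX _ hinj (fun v : Fin c → S =>
                  ¬ |(1 / c : ℝ) * ∑ i : Fin c, V d (v i) - μf a| ≤ lam)
            _ = ENNReal.ofReal (∑ v ∈ Finset.univ.filter (fun v : Fin c → S =>
                  ¬ |(1 / c : ℝ) * ∑ i : Fin c, V d (v i) - μf a| ≤ lam),
                ∏ i : Fin c, P s a (v i)) := by
                rw [ENNReal.ofReal_sum_of_nonneg
                  (fun v _ => Finset.prod_nonneg fun i _ => hP0 s a (v i))]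
                exact Finset.sum_congr rfl fun v _ => hconv v
            _ ≤ ENNReal.ofReal (2 * Real.exp (-lam ^ 2 * c / (2 * vmax ^ 2))) := by
                apply ENNReal.ofReal_le_ofReal
                exact aux_chernoff (P s a) (V d) vmax lam (μf a) c hc hvmax hlam
                  (hP0 s a) (hP1 s a) (fun s' => hVb d s') (by rw [hμf])
            _ = 2 * ε := by
                rw [hε, ENNReal.ofReal_mul (by norm_num)]
                norm_num
        -- bound on the split events via independence and IH
        have hSbound : ∀ (a : A) (i : Fin c) (s' : S),
            volume ({ω : Ω | X (p, s, a, i) ω = s'} ∩ Bd a i s') ≤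
              ENNReal.ofReal (P s a s') * G := by
          intro a i s'
          have hj0 : ∀ g : {j // j ∈ mcmsK S A c d ((a, i) :: p)},
              (g : List (A × Fin c) × S × A × Fin c) ≠ (p, s, a, i) := by
            intro g hg
            have hlen := mcmsK_length (g : List (A × Fin c) × S × A × Fin c) g.2
            rw [hg] at hlen
            simp only [List.length_cons] at hlen
            omega
          have hBQ : Bd a i s' = {ω | (fun v : {j // j ∈ mcmsK S A c d ((a, i) :: p)} → S =>
              ¬ |mcmsW T τ h c d ((a, i) :: p) s'
                  (fun j => if hj : j ∈ mcmsK S A c d ((a, i) :: p) then v ⟨j, hj⟩ else s0)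
                - V d s'| ≤ lam * (d:ℝ))
              (fun g => X (g : List (A × Fin c) × S × A × Fin c) ω)} := by
            ext ω
            simp only [hBdd, Set.mem_setOf_eq]
            rw [hWX d ((a, i) :: p) s' ω]
            have hWW : mcmsW T τ h c d ((a, i) :: p) s' (fun j => X j ω)
                = mcmsW T τ h c d ((a, i) :: p) s'
                  (fun j => if hj : j ∈ mcmsK S A c d ((a, i) :: p) then X j ω else s0) := by
              apply mcmsW_congr
              intro j hj
              rw [dif_pos hj]
            rw [hWW]
          calc volume ({ω : Ω | X (p, s, a, i) ω = s'} ∩ Bd a i s')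
              = volume {ω : Ω | X (p, s, a, i) ω = s'} * volume (Bd a i s') := by
                rw [hBQ]
                exact aux_split X hmeasX hindepX _ Subtype.coe_injective _ hj0 s'
                  (fun v : {j // j ∈ mcmsK S A c d ((a, i) :: p)} → S =>
                    ¬ |mcmsW T τ h c d ((a, i) :: p) s'
                      (fun j => if hj : j ∈ mcmsK S A c d ((a, i) :: p) then v ⟨j, hj⟩ else s0)
                      - V d s'| ≤ lam * (d:ℝ))
            _ ≤ ENNReal.ofReal (P s a s') * G := by
                have h1 : volume {ω : Ω | X (p, s, a, i) ω = s'} = ENNReal.ofReal (P s a s') :=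
                  hdist p s a i s'
                rw [h1]
                exact mul_le_mul_right (ih ((a, i) :: p) s') _
        -- put everything together
        have hmarg : ∀ a : A, ∑ s' : S, ENNReal.ofReal (P s a s') = 1 := by
          intro a
          rw [← ENNReal.ofReal_sum_of_nonneg (fun s' _ => hP0 s a s'), hP1]
          exact ENNReal.ofReal_one
        have hstep : volume {ω : Ω | ¬ |Vhat (d+1) p s ω - V (d+1) s| ≤ lam * ((d+1:ℕ):ℝ)} ≤
            (Fintype.card A : ENNReal) * (2 * ε + (c : ENNReal) * G) := by
          calc volume {ω : Ω | ¬ |Vhat (d+1) p s ω - V (d+1) s| ≤ lam * ((d+1:ℕ):ℝ)}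
              ≤ volume (⋃ a ∈ (Finset.univ : Finset A), (Hset a ∪ USet a)) :=
                measure_mono hsub
            _ ≤ ∑ a ∈ Finset.univ, volume (Hset a ∪ USet a) :=
                measure_biUnion_finset_le _ _
            _ ≤ ∑ a ∈ (Finset.univ : Finset A), (2 * ε + (c : ENNReal) * G) := by
                apply Finset.sum_le_sum
                intro a _
                calc volume (Hset a ∪ USet a) ≤ volume (Hset a) + volume (USet a) :=
                      measure_union_le _ _
                  _ ≤ 2 * ε + (c : ENNReal) * G := by
                      apply add_le_add (hHbound a)
                      calc volume (USet a)
                          ≤ ∑ i ∈ (Finset.univ : Finset (Fin c)),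
                            volume (⋃ s' ∈ (Finset.univ : Finset S),
                              ({ω : Ω | X (p, s, a, i) ω = s'} ∩ Bd a i s')) := by
                            rw [hUSet]
                            exact measure_biUnion_finset_le _ _
                        _ ≤ ∑ i ∈ (Finset.univ : Finset (Fin c)), ∑ s' ∈ (Finset.univ : Finset S),
                            volume ({ω : Ω | X (p, s, a, i) ω = s'} ∩ Bd a i s') := by
                            apply Finset.sum_le_sum
                            intro i _
                            exact measure_biUnion_finset_le _ _
                        _ ≤ ∑ i ∈ (Finset.univ : Finset (Fin c)), ∑ s' ∈ (Finset.univ : Finset S),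
                            ENNReal.ofReal (P s a s') * G := by
                            apply Finset.sum_le_sum
                            intro i _
                            apply Finset.sum_le_sum
                            intro s' _
                            exact hSbound a i s'
                        _ = (c : ENNReal) * G := by
                            have hin : ∀ i : Fin c, ∑ s' ∈ (Finset.univ : Finset S),
                                ENNReal.ofReal (P s a s') * G = G := by
                              intro i
                              rw [← Finset.sum_mul, hmarg a, one_mul]
                            rw [Finset.sum_congr rfl fun i _ => hin i, Finset.sum_const,
                              Finset.card_univ, Fintype.card_fin, nsmul_eq_mul]
            _ = (Fintype.card A : ENNReal) * (2 * ε + (c : ENNReal) * G) := by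
                rw [Finset.sum_const, Finset.card_univ, nsmul_eq_mul]
        refine hstep.trans (le_of_eq ?_)
        rw [hG, geom_sum_succ]
        push_cast
        ring
  -- compare the geometric bound with (2c|A|)^d
  have hgeom : 2 * (Fintype.card A : ENNReal) * ε *
      ∑ k ∈ Finset.range d0, ((c * Fintype.card A : ℕ) : ENNReal) ^ k ≤
      ((2 * c * Fintype.card A : ℕ) : ENNReal) ^ d0 * ε := by
    have hnat : 2 * Fintype.card A * ∑ k ∈ Finset.range d0, (c * Fintype.card A) ^ k ≤
        (2 * c * Fintype.card A) ^ d0 := by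
      cases d0 with
      | zero => simp
      | succ e =>
        have hm1 : 1 ≤ c * Fintype.card A := by
          calc 1 = 1 * 1 := by norm_num
          _ ≤ c * Fintype.card A := Nat.mul_le_mul hc hA1
        have hsum : ∑ k ∈ Finset.range (e+1), (c * Fintype.card A) ^ k ≤
            (e+1) * (c * Fintype.card A) ^ e := by
          calc ∑ k ∈ Finset.range (e+1), (c * Fintype.card A) ^ k
              ≤ (Finset.range (e+1)).card • ((c * Fintype.card A) ^ e) :=
                Finset.sum_le_card_nsmul _ _ _ (fun k hk => Nat.pow_le_pow_right hm1 (by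
                  rw [Finset.mem_range] at hk; omega))
            _ = (e+1) * (c * Fintype.card A) ^ e := by rw [Finset.card_range, smul_eq_mul]
        have h2p : e + 1 ≤ 2 ^ e := Nat.lt_two_pow_self
        calc 2 * Fintype.card A * ∑ k ∈ Finset.range (e+1), (c * Fintype.card A) ^ k
            ≤ 2 * Fintype.card A * ((e+1) * (c * Fintype.card A) ^ e) :=
              Nat.mul_le_mul_left _ hsum
          _ ≤ 2 * Fintype.card A * (2 ^ e * (c * Fintype.card A) ^ e) :=
              Nat.mul_le_mul_left _ (Nat.mul_le_mul_right _ h2p)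
          _ ≤ 2 * (c * Fintype.card A) * (2 ^ e * (c * Fintype.card A) ^ e) :=
              Nat.mul_le_mul_right _ (Nat.mul_le_mul_left 2
                (Nat.le_mul_of_pos_left _ (by omega)))
          _ = (2 * c * Fintype.card A) ^ (e+1) := by ring
    calc 2 * (Fintype.card A : ENNReal) * ε *
        ∑ k ∈ Finset.range d0, ((c * Fintype.card A : ℕ) : ENNReal) ^ k
        = ((2 * Fintype.card A * ∑ k ∈ Finset.range d0, (c * Fintype.card A) ^ k : ℕ) :
            ENNReal) * ε := by
          push_cast
          ring
      _ ≤ ((2 * c * Fintype.card A : ℕ) : ENNReal) ^ d0 * ε := by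
          apply mul_le_mul_left
          exact_mod_cast hnat
  -- conclude
  have hcover : (1:ENNReal) ≤ volume {ω | |Vhat d0 ([] : List (A × Fin c)) s0 ω - V d0 s0| ≤
      lam * d0} + volume {ω | ¬ |Vhat d0 ([] : List (A × Fin c)) s0 ω - V d0 s0| ≤
      lam * d0} := by
    have hU : (Set.univ : Set Ω) ⊆
        {ω | |Vhat d0 ([] : List (A × Fin c)) s0 ω - V d0 s0| ≤ lam * d0} ∪
        {ω | ¬ |Vhat d0 ([] : List (A × Fin c)) s0 ω - V d0 s0| ≤ lam * d0} := by
      intro ω _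
      by_cases hP : |Vhat d0 ([] : List (A × Fin c)) s0 ω - V d0 s0| ≤ lam * d0
      · exact Or.inl hP
      · exact Or.inr hP
    calc (1:ENNReal) = volume (Set.univ : Set Ω) := measure_univ.symm
      _ ≤ volume ({ω | |Vhat d0 ([] : List (A × Fin c)) s0 ω - V d0 s0| ≤ lam * d0} ∪
          {ω | ¬ |Vhat d0 ([] : List (A × Fin c)) s0 ω - V d0 s0| ≤ lam * d0}) :=
          measure_mono hU
      _ ≤ _ := measure_union_le _ _
  rw [tsub_le_iff_right]
  calc (1:ENNReal) ≤ volume {ω | |Vhat d0 ([] : List (A × Fin c)) s0 ω - V d0 s0| ≤ lam * d0}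
        + volume {ω | ¬ |Vhat d0 ([] : List (A × Fin c)) s0 ω - V d0 s0| ≤ lam * d0} := hcover
    _ ≤ volume {ω | |Vhat d0 ([] : List (A × Fin c)) s0 ω - V d0 s0| ≤ lam * d0}
        + ((2 * c * Fintype.card A : ℕ) : ENNReal) ^ d0 * ε :=
        add_le_add_right ((key d0 ([] : List (A × Fin c)) s0).trans hgeom) _
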